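/- For every integer n ≥ 1 and every real number x with |x| < 1, the n-th derivative of the inverse hyperbolic tangent function satisfies (as an identity of complex numbers, after casting the real left-hand side to ℂ) Dₓⁿ arctanh(x) = ((-1)^{n+1} (n-1)! · i^{n-1} / (√(1-x²))^{n+1}) · U_{n-1}(i·x / √(1-x²)), where U_{n-1} is the (n−1)-st Chebyshev polynomial of the second kind over ℂ evaluated at i·x/√(1-x²). -/

import Mathlib

open Complex Polynomial.Chebyshev in
theorem chebU_closed (z w : ℂ) (hw : w ≠ 0) (h : w ^ 2 = z ^ 2 - 1) (m : ℕ) :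
    (Polynomial.Chebyshev.U ℂ (m : ℤ)).eval z =
      ((z + w) ^ (m + 1) - (z - w) ^ (m + 1)) / (2 * w) := by
  induction m using Nat.twoStepInduction with
  | zero => simp [Polynomial.Chebyshev.U_zero]; field_simp; ring
  | one =>
    simp only [Nat.cast_one, Polynomial.Chebyshev.U_one]
    simp only [Polynomial.eval_mul, Polynomial.eval_ofNat, Polynomial.eval_X]
    field_simp
    ring
  | more m ih1 ih2 =>
    have : ((m + 2 : ℕ) : ℤ) = (m : ℤ) + 2 := by push_cast; ring
    rw [this, Polynomial.Chebyshev.U_add_two]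
    simp only [Polynomial.eval_sub, Polynomial.eval_mul, Polynomial.eval_ofNat,
      Polynomial.eval_X]
    push_cast at ih1 ih2 ⊢
    rw [ih1, ih2]
    field_simp
    linear_combination ((z - w) ^ (m + 1) - (z + w) ^ (m + 1)) * h

open Complex in
/-- The real inverse hyperbolic tangent function, `arctanh x = (1/2) ln((1+x)/(1-x))`. -/
noncomputable def arctanh (x : ℝ) : ℝ := (1 / 2) * Real.log ((1 + x) / (1 - x))

theorem arctanh_hasDerivAt {x : ℝ} (hx : |x| < 1) :
    HasDerivAt arctanh (1 / 2 * ((1 - x)⁻¹ + (1 + x)⁻¹)) x := by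
  have hx1 : -1 < x := (abs_lt.1 hx).1
  have hx2 : x < 1 := (abs_lt.1 hx).2
  have h1 : (0:ℝ) < 1 + x := by linarith
  have h2 : (0:ℝ) < 1 - x := by linarith
  have heq : arctanh =ᶠ[nhds x] fun y => 1 / 2 * (Real.log (1 + y) - Real.log (1 - y)) := by
    have hs : IsOpen {y : ℝ | |y| < 1} := isOpen_lt continuous_abs continuous_const
    filter_upwards [hs.mem_nhds hx] with y hy
    have hy1 : (0:ℝ) < 1 + y := by have := abs_lt.1 hy; linarith [this.1]
    have hy2 : (0:ℝ) < 1 - y := by have := abs_lt.1 hy; linarith [(abs_lt.1 hy).2]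
    simp only [arctanh]
    rw [Real.log_div hy1.ne' hy2.ne']
  have hd1 : HasDerivAt (fun y : ℝ => Real.log (1 + y)) ((1 + x)⁻¹) x := by
    have : HasDerivAt (fun y : ℝ => 1 + y) 1 x := (hasDerivAt_id x).const_add 1
    exact ((Real.hasDerivAt_log h1.ne').comp x this).congr_deriv (by ring)
  have hd2 : HasDerivAt (fun y : ℝ => Real.log (1 - y)) (-(1 - x)⁻¹) x := by
    have : HasDerivAt (fun y : ℝ => 1 - y) (-1) x := by
      exact (hasDerivAt_id' x).const_sub 1
    exact ((Real.hasDerivAt_log h2.ne').comp x this).congr_deriv (by ring)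
  have : HasDerivAt (fun y => 1 / 2 * (Real.log (1 + y) - Real.log (1 - y)))
      (1 / 2 * ((1 + x)⁻¹ - -(1 - x)⁻¹)) x := ((hd1.sub hd2).const_mul (1/2 : ℝ))
  refine HasDerivAt.congr_of_eventuallyEq ?_ heq
  exact this.congr_deriv (by ring)

theorem iteratedDeriv_arctanh (n : ℕ) (hn : 1 ≤ n) (x : ℝ) (hx : |x| < 1) :
    iteratedDeriv n arctanh x =
      (Nat.factorial (n - 1) : ℝ) / 2 *
        ((1 - x) ^ (-(n : ℤ)) + (-1) ^ (n + 1) * (1 + x) ^ (-(n : ℤ))) := by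
  induction n, hn using Nat.le_induction generalizing x with
  | base =>
    have := (arctanh_hasDerivAt hx).deriv
    rw [iteratedDeriv_one, this]
    norm_num
  | succ n hn ih =>
    have hs : IsOpen {y : ℝ | |y| < 1} := isOpen_lt continuous_abs continuous_const
    rw [iteratedDeriv_succ]
    have heq : iteratedDeriv n arctanh =ᶠ[nhds x] fun y =>
        (Nat.factorial (n - 1) : ℝ) / 2 *
          ((1 - y) ^ (-(n : ℤ)) + (-1) ^ (n + 1) * (1 + y) ^ (-(n : ℤ))) := by
      filter_upwards [hs.mem_nhds hx] with y hy using ih y hy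
    rw [heq.deriv_eq]
    have hx1 : -1 < x := (abs_lt.1 hx).1
    have hx2 : x < 1 := (abs_lt.1 hx).2
    have h1 : (1 + x : ℝ) ≠ 0 := by linarith
    have h2 : (1 - x : ℝ) ≠ 0 := by linarith
    have hd1 : HasDerivAt (fun y : ℝ => (1 - y) ^ (-(n : ℤ)))
        ((n : ℝ) * (1 - x) ^ (-(n : ℤ) - 1)) x := by
      have hb : HasDerivAt (fun y : ℝ => 1 - y) (-1) x := by
        exact (hasDerivAt_id' x).const_sub 1
      have : HasDerivAt (fun y : ℝ => (1 - y) ^ (-(n : ℤ))) (((-(n : ℤ) : ℤ) : ℝ) * (1 - x) ^ (-(n : ℤ) - 1) * -1) x :=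
        (hasDerivAt_zpow (-(n : ℤ)) (1 - x) (Or.inl h2)).comp x hb
      convert this using 1
      push_cast
      ring
    have hd2 : HasDerivAt (fun y : ℝ => (1 + y) ^ (-(n : ℤ)))
        (-(n : ℝ) * (1 + x) ^ (-(n : ℤ) - 1)) x := by
      have hb : HasDerivAt (fun y : ℝ => 1 + y) 1 x := (hasDerivAt_id x).const_add 1
      have : HasDerivAt (fun y : ℝ => (1 + y) ^ (-(n : ℤ))) (((-(n : ℤ) : ℤ) : ℝ) * (1 + x) ^ (-(n : ℤ) - 1) * 1) x :=
        (hasDerivAt_zpow (-(n : ℤ)) (1 + x) (Or.inl h1)).comp x hb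
      convert this using 1
      push_cast
      ring
    have hD := ((hd1.add ((hd2.const_mul ((-1 : ℝ) ^ (n + 1))))).const_mul
      ((Nat.factorial (n - 1) : ℝ) / 2))
    erw [hD.deriv]
    have hfac : (n : ℝ) * (Nat.factorial (n - 1) : ℝ) = (Nat.factorial n : ℝ) := by
      rw [← Nat.cast_mul, Nat.mul_factorial_pred (by omega)]
    have he : (-(((n : ℕ) + 1 : ℕ) : ℤ)) = -(n : ℤ) - 1 := by push_cast; ring
    rw [Nat.add_sub_cancel, he]
    rw [← hfac]
    ring

open Complex in
/-- For every integer `n ≥ 1` and every real `x` with `|x| < 1`, as complex numbers,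
`Dₓⁿ arctanh(x) = ((-1)^(n+1) (n-1)! i^(n-1) / (√(1-x²))^(n+1)) · U_{n-1}(i x/√(1-x²))`. -/
theorem iteratedDeriv_arctanh_eq_chebyshevU (n : ℕ) (hn : 1 ≤ n) (x : ℝ) (hx : |x| < 1) :
    ((iteratedDeriv n arctanh x : ℝ) : ℂ) =
      ((-1) ^ (n + 1) * (Nat.factorial (n - 1) : ℂ) * I ^ (n - 1) /
          ((Real.sqrt (1 - x ^ 2) : ℝ) : ℂ) ^ (n + 1)) *
        (Polynomial.Chebyshev.U ℂ ((n : ℤ) - 1)).eval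
          (I * (x : ℂ) / ((Real.sqrt (1 - x ^ 2) : ℝ) : ℂ)) := by
  obtain ⟨m, rfl⟩ : ∃ m, n = m + 1 := ⟨n - 1, (Nat.succ_pred_eq_of_pos hn).symm⟩
  have hx1 : -1 < x := (abs_lt.1 hx).1
  have hx2 : x < 1 := (abs_lt.1 hx).2
  have hpos : (0:ℝ) < 1 - x ^ 2 := by nlinarith
  set s : ℝ := Real.sqrt (1 - x ^ 2) with hs
  have hs0 : 0 < s := Real.sqrt_pos.2 hpos
  have hs2 : s ^ 2 = 1 - x ^ 2 := Real.sq_sqrt hpos.le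
  have hS0 : ((s : ℂ)) ≠ 0 := by exact_mod_cast hs0.ne'
  have hS2 : ((s : ℂ)) ^ 2 = 1 - (x : ℂ) ^ 2 := by exact_mod_cast congrArg (Complex.ofReal ·) hs2
  set z : ℂ := I * (x : ℂ) / (s : ℂ) with hz
  have hw0 : (I / (s : ℂ)) ≠ 0 := div_ne_zero I_ne_zero hS0
  have hwz : (I / (s : ℂ)) ^ 2 = z ^ 2 - 1 := by
    rw [hz]
    field_simp
    linear_combination hS2 + (1 - (x:ℂ)^2) * Complex.I_sq
  have hm : ((m + 1 : ℕ) : ℤ) - 1 = (m : ℤ) := by push_cast; ring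
  rw [hm, chebU_closed z (I / (s : ℂ)) hw0 hwz m,
    iteratedDeriv_arctanh (m + 1) (by omega) x hx]
  have ha : ((1 : ℂ) - x) ≠ 0 := by
    intro h
    have : (1 - x : ℝ) = 0 := by exact_mod_cast h
    linarith
  have hb : ((1 : ℂ) + x) ≠ 0 := by
    intro h
    have : (1 + x : ℝ) = 0 := by exact_mod_cast h
    linarith
  have hzw1 : z + I / (s : ℂ) = I * (1 + x) / s := by rw [hz]; field_simp; ring
  have hzw2 : z - I / (s : ℂ) = I * (x - 1) / s := by rw [hz]; field_simp
  rw [hzw1, hzw2, Nat.add_sub_cancel]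
  simp only [zpow_neg, zpow_natCast]
  push_cast
  have hp1 : (I * ((1 : ℂ) + x) / s) ^ (m + 1) = I ^ (m + 1) * (1 + (x:ℂ)) ^ (m + 1) / s ^ (m + 1) := by
    rw [div_pow, mul_pow]
  have hp2 : (I * ((x : ℂ) - 1) / s) ^ (m + 1) = I ^ (m + 1) * ((x:ℂ) - 1) ^ (m + 1) / s ^ (m + 1) := by
    rw [div_pow, mul_pow]
  rw [hp1, hp2]
  have hI2 : (I : ℂ) ^ m * I ^ (m + 1) = (-1) ^ m * I := by
    rw [← pow_add]
    have : m + (m + 1) = 2 * m + 1 := by ring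
    rw [this, pow_succ, pow_mul, I_sq]
  have hxm : ((x : ℂ) - 1) ^ (m + 1) = (-1) ^ (m + 1) * (1 - (x:ℂ)) ^ (m + 1) := by
    rw [← neg_pow]
    ring_nf
  have hSp : ((s : ℂ)) ^ (m + 1 + 1) * (s : ℂ) ^ (m + 1) =
      (s : ℂ) * ((1 - (x:ℂ)) ^ (m + 1) * (1 + (x:ℂ)) ^ (m + 1)) := by
    have h' : (m + 1 + 1) + (m + 1) = 2 * (m + 1) + 1 := by ring
    rw [← pow_add, h', pow_succ, pow_mul, hS2,
      show ((1:ℂ) - (x:ℂ) ^ 2) = (1 - x) * (1 + x) from by ring, mul_pow]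
    ring
  have hneg : ((-1 : ℂ)) ^ m * (-1) ^ m = 1 := by
    rw [← pow_add, ← two_mul, pow_mul]
    norm_num
  rw [hxm]
  field_simp
  linear_combination
    ((m.factorial : ℂ) * ((1 + (x:ℂ)) ^ (m+1) + (-1:ℂ) ^ m * (1 - (x:ℂ)) ^ (m+1)) * I) * hSp -
    ((m.factorial : ℂ) * ((1 + (x:ℂ)) ^ (m+1) + (-1:ℂ) ^ m * (1 - (x:ℂ)) ^ (m+1)) * (s:ℂ) *
      (1 - (x:ℂ)) ^ (m+1) * (1 + (x:ℂ)) ^ (m+1) * (-1:ℂ) ^ m) * hI2 -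
    ((m.factorial : ℂ) * ((1 + (x:ℂ)) ^ (m+1) + (-1:ℂ) ^ m * (1 - (x:ℂ)) ^ (m+1)) * (s:ℂ) *
      (1 - (x:ℂ)) ^ (m+1) * (1 + (x:ℂ)) ^ (m+1) * I) * hneg
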